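/- Let (W,S) be a Coxeter system, X ⊆ S, and w a word on S with reflection sequence R(w) = (r_1(w),…,r_k(w)). Let w_X = t_1⋯t_p be the word on X constructed from w as follows: j₁ < ⋯ < j_p are the positions with r_{j_n}(w) ∈ W_X, and t_n = w_{j_n−1}·s_{i_{j_n}}·w_{j_n−1}⁻¹ ∈ X where w_{j−1} is the (X,∅)-reduced part of the prefix of length j−1. Then the reflection sequence of w_X equals the subsequence of R(w) consisting of the entries lying in W_X: r_n(w_X) = r_{j_n}(w) for all 1 ≤ n ≤ p. -/

import Mathlib

/-- The standard parabolic subgroup of a Coxeter system generated by the simple reflections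
indexed by `X`. -/
def CoxeterSystem.standardParabolic {B W : Type*} [Group W] {M : CoxeterMatrix B}
    (cs : CoxeterSystem M W) (X : Set B) : Subgroup W :=
  Subgroup.closure (cs.simple '' X)


open List CoxeterSystem

namespace ExchAux

noncomputable section
open Classical

variable {B : Type*} {W : Type*} [Group W] {M : CoxeterMatrix B} (cs : CoxeterSystem M W)

local prefix:100 "s" => cs.simple
local prefix:100 "π" => cs.wordProd
local prefix:100 "ℓ" => cs.length
local prefix:100 "ris" => cs.rightInvSeq

def sgn (t : W) (l : List W) : ℤˣ := (l.map fun u => if u = t then (-1 : ℤˣ) else 1).prod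

omit [Group W] in
lemma sgn_cons (t u : W) (l : List W) :
    sgn t (u :: l) = (if u = t then (-1 : ℤˣ) else 1) * sgn t l := by
  simp [sgn]

omit [Group W] in
lemma sgn_append (t : W) (l l' : List W) : sgn t (l ++ l') = sgn t l * sgn t l' := by
  simp [sgn]

omit [Group W] in
lemma sgn_singleton (t u : W) : sgn t [u] = if u = t then (-1 : ℤˣ) else 1 := by
  simp [sgn]

omit [Group W] in
lemma sgn_eq_one_of_not_mem (t : W) (l : List W) (h : t ∉ l) : sgn t l = 1 := by
  induction l with
  | nil => rfl
  | cons u l ih =>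
      rw [sgn_cons, if_neg (by rintro rfl; exact h mem_cons_self),
        ih (fun hm => h (mem_cons_of_mem _ hm)), one_mul]

omit [Group W] in
lemma mem_of_sgn_ne_one (t : W) (l : List W) (h : sgn t l ≠ 1) : t ∈ l := by
  by_contra hm
  exact h (sgn_eq_one_of_not_mem t l hm)

lemma conj_shift (a b c t : W) : a * t * b = c ↔ t = a⁻¹ * c * b⁻¹ := by
  constructor
  · intro h; rw [← h]; group
  · intro h; rw [h]; group

lemma inv_pow_ij (i j : B) (k : ℕ) : ((s i * s j) ^ k)⁻¹ = (s j * s i) ^ k := by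
  rw [← inv_pow, mul_inv_rev, cs.inv_simple, cs.inv_simple]

lemma aux0 (i j : B) (k : ℕ) : s j * (s i * s j) ^ k = (s j * s i) ^ k * s j := by
  induction k with
  | zero => simp
  | succ k ih =>
      rw [pow_succ, ← mul_assoc, ih, pow_succ]
      group

lemma aux1 (i j : B) (k l : ℕ) :
    (s j * s i) ^ k * s j * (s i * s j) ^ l = (s j * s i) ^ (k + l) * s j := by
  rw [mul_assoc, aux0, ← mul_assoc, ← pow_add]

def etaFun (i : B) : W × ℤˣ → W × ℤˣ :=
  fun p => (s i * p.1 * s i, if p.1 = s i then -p.2 else p.2)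

lemma simple_conj_cancel (i : B) (x : W) : s i * (s i * x * s i) * s i = x := by
  rw [show s i * (s i * x * s i) * s i = (s i * s i) * x * (s i * s i) by group,
    cs.simple_mul_simple_self]
  group

lemma simple_conj_eq_iff (i : B) (x : W) : s i * x * s i = s i ↔ x = s i := by
  constructor
  · intro h
    have h2 := congrArg (fun z => s i * z * s i) h
    rw [simple_conj_cancel] at h2
    rw [h2, show s i * s i * s i = (s i * s i) * s i by group, cs.simple_mul_simple_self, one_mul]
  · rintro rfl
    rw [cs.simple_mul_simple_self, one_mul]

lemma etaFun_involutive (i : B) : Function.Involutive (etaFun cs i) := by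
  rintro ⟨a, ε⟩
  unfold etaFun
  dsimp only
  rw [simple_conj_cancel, Prod.mk.injEq]
  refine ⟨rfl, ?_⟩
  by_cases h : a = s i
  · rw [if_pos h, if_pos ((simple_conj_eq_iff cs i a).mpr h)]; exact neg_neg ε
  · rw [if_neg h, if_neg (fun hh => h ((simple_conj_eq_iff cs i a).mp hh))]

def eta (i : B) : Equiv.Perm (W × ℤˣ) := (etaFun_involutive cs i).toPerm

lemma eta_apply (i : B) (p : W × ℤˣ) :
    eta cs i p = (s i * p.1 * s i, if p.1 = s i then -p.2 else p.2) := rfl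

omit [Group W] in
lemma ite_neg (c : Prop) [Decidable c] (x : ℤˣ) :
    (if c then -x else x) = (if c then (-1 : ℤˣ) else 1) * x := by
  split <;> simp

lemma eta_mul_pow_apply (i j : B) (k : ℕ) (t : W) (ε : ℤˣ) :
    ((eta cs i * eta cs j) ^ k) (t, ε) =
      ((s i * s j) ^ k * t * (s j * s i) ^ k,
        ε * sgn t (List.map (fun l => (s j * s i) ^ l * s j) (List.range (2 * k)))) := by
  induction k with
  | zero => simp [sgn]
  | succ k ih =>
      rw [pow_succ', Equiv.Perm.mul_apply, ih, Equiv.Perm.mul_apply, eta_apply, eta_apply]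
      dsimp only
      have hc1 : ((s i * s j) ^ k * t * (s j * s i) ^ k = s j)
          ↔ ((s j * s i) ^ (2 * k) * s j = t) := by
        rw [conj_shift, inv_pow_ij cs i j, inv_pow_ij cs j i, aux1, ← two_mul, eq_comm]
      have hc2 : (s j * ((s i * s j) ^ k * t * (s j * s i) ^ k) * s j = s i)
          ↔ ((s j * s i) ^ (2 * k + 1) * s j = t) := by
        rw [show s j * ((s i * s j) ^ k * t * (s j * s i) ^ k) * s j
            = (s j * (s i * s j) ^ k) * t * ((s j * s i) ^ k * s j) by group,
          conj_shift]
        have hA : (s j * (s i * s j) ^ k)⁻¹ = (s j * s i) ^ k * s j := by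
          rw [mul_inv_rev, inv_pow_ij cs i j, cs.inv_simple]
        have hB : ((s j * s i) ^ k * s j)⁻¹ = s j * (s i * s j) ^ k := by
          rw [mul_inv_rev, inv_pow_ij cs j i, cs.inv_simple]
        have heq : (s j * s i) ^ k * s j * s i * (s j * (s i * s j) ^ k)
            = (s j * s i) ^ (2 * k + 1) * s j := by
          rw [show 2 * k + 1 = (k + 1) + k by ring, ← aux1 cs i j (k + 1) k, pow_succ]
          group
        rw [hA, hB, heq, eq_comm]
      have hrange : 2 * (k + 1) = 2 * k + 1 + 1 := by ring
      rw [hrange, range_succ, range_succ, map_append, map_append, sgn_append, sgn_append]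
      rw [Prod.mk.injEq]
      constructor
      · rw [pow_succ' (s i * s j), pow_succ (s j * s i)]
        group
      · rw [if_congr hc1 rfl rfl, if_congr hc2 rfl rfl,
          map_singleton, map_singleton, sgn_singleton, sgn_singleton]
        split_ifs <;> simp [mul_comm, mul_left_comm, mul_assoc]

lemma liftable : CoxeterMatrix.IsLiftable M (fun i => eta cs i) := by
  intro i j
  apply Equiv.ext
  rintro ⟨t, ε⟩
  rw [Equiv.Perm.one_apply, eta_mul_pow_apply, cs.simple_mul_simple_pow i j,
    cs.simple_mul_simple_pow' i j, one_mul, mul_one]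
  have hper : ∀ l : ℕ, (s j * s i) ^ (M i j + l) * s j = (s j * s i) ^ l * s j := by
    intro l
    rw [pow_add, cs.simple_mul_simple_pow' i j, one_mul]
  have hmap : List.map (fun l => (s j * s i) ^ l * s j) (List.range (2 * M.M i j))
      = List.map (fun l => (s j * s i) ^ l * s j) (List.range (M.M i j))
        ++ List.map (fun l => (s j * s i) ^ l * s j) (List.range (M.M i j)) := by
    rw [two_mul, List.range_add, map_append, map_map]
    congr 1
    apply List.map_congr_left
    intro l _
    exact hper l
  rw [hmap, sgn_append, Int.units_mul_self, mul_one]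

def rho : W →* Equiv.Perm (W × ℤˣ) := cs.lift ⟨fun i => eta cs i, liftable cs⟩

lemma rho_simple (i : B) : rho cs (s i) = eta cs i :=
  cs.lift_apply_simple (liftable cs) i

lemma rho_wordProd (ω : List B) (t : W) (ε : ℤˣ) :
    rho cs (π ω) (t, ε) = (π ω * t * (π ω)⁻¹, ε * sgn t (ris ω)) := by
  induction ω generalizing t ε with
  | nil => simp [sgn]
  | cons i ω ih =>
      have hris : ris (i :: ω) = ((π ω)⁻¹ * s i * π ω) :: ris ω := rfl
      rw [cs.wordProd_cons, map_mul, Equiv.Perm.mul_apply, ih, rho_simple, eta_apply]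
      dsimp only
      rw [hris, sgn_cons, Prod.mk.injEq]
      constructor
      · rw [mul_inv_rev, cs.inv_simple]
        group
      · have hcond : (π ω * t * (π ω)⁻¹ = s i) ↔ ((π ω)⁻¹ * s i * π ω = t) := by
          rw [conj_shift, inv_inv, eq_comm]
        rw [if_congr hcond rfl rfl, ite_neg]
        simp [mul_comm, mul_left_comm, mul_assoc]

theorem exchange {ω : List B} (hred : cs.IsReduced ω) {i : B}
    (h : ℓ (π ω * s i) < ℓ (π ω)) :
    ∃ k < ω.length, π ω * s i = π (ω.eraseIdx k) := by
  obtain ⟨ω', hred', heq'⟩ := cs.exists_reduced_word' (π ω * s i)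
  have hπ : π (ω' ++ [i]) = π ω := by
    rw [wordProd_append, wordProd_singleton, ← heq', cs.simple_mul_simple_cancel_right]
  have h1 := rho_wordProd cs ω (s i) 1
  have h2 := rho_wordProd cs (ω' ++ [i]) (s i) 1
  rw [hπ, h1] at h2
  have hsgn : sgn (s i) (ris ω) = sgn (s i) (ris (ω' ++ [i])) := by
    have := congrArg Prod.snd h2
    simpa using this
  have hris' : ris (ω' ++ [i]) = (List.map (MulAut.conj (s i)) (ris ω')).concat (s i) := by
    rw [← concat_eq_append, cs.rightInvSeq_concat]
  have hnotmem : s i ∉ List.map (MulAut.conj (s i)) (ris ω') := by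
    intro hmem
    obtain ⟨u, hu, huu⟩ := List.mem_map.mp hmem
    have hu2 : u = s i := by
      have : s i * u * (s i)⁻¹ = s i := huu
      rw [cs.inv_simple] at this
      exact (simple_conj_eq_iff cs i u).mp this
    subst hu2
    have hinv := cs.isRightInversion_of_mem_rightInvSeq hred' hu
    have : ℓ (π ω' * s i) < ℓ (π ω') := hinv.2
    rw [← heq', cs.simple_mul_simple_cancel_right] at this
    omega
  have hval : sgn (s i) (ris (ω' ++ [i])) = -1 := by
    rw [hris', concat_eq_append, sgn_append, sgn_eq_one_of_not_mem _ _ hnotmem,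
      sgn_singleton, if_pos rfl, one_mul]
  have hmem : s i ∈ ris ω := by
    apply mem_of_sgn_ne_one
    rw [hsgn, hval]
    decide
  obtain ⟨k, hk, hget⟩ := List.mem_iff_getElem.mp hmem
  rw [cs.length_rightInvSeq] at hk
  refine ⟨k, hk, ?_⟩
  have := cs.wordProd_mul_getD_rightInvSeq ω k
  rw [List.getD_eq_getElem _ _ (by rwa [cs.length_rightInvSeq]), hget] at this
  exact this


lemma filter_range_lt (p : ℕ → Bool) {j N : ℕ} (h : j ≤ N) :
    (List.range N).filter (fun m => decide (m < j) && p m) = (List.range j).filter p := by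
  induction N with
  | zero =>
      have : j = 0 := by omega
      subst this; rfl
  | succ N ih =>
      by_cases hj : j ≤ N
      · rw [range_succ, filter_append, ih hj]
        have : [N].filter (fun m => decide (m < j) && p m) = [] := by
          simp [show ¬ N < j by omega]
        rw [this, append_nil]
      · have hjN : j = N + 1 := by omega
        subst hjN
        apply filter_congr
        intro m hm
        have : m < N + 1 := mem_range.mp hm
        simp [this]

lemma take_eq_filter_lt {l : List ℕ} (hl : l.Pairwise (· < ·)) {n : ℕ} (hn : n < l.length) :
    l.take n = l.filter (fun m => decide (m < l.getD n 0)) := by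
  have hsplit : l.filter (fun m => decide (m < l.getD n 0))
      = (l.take n).filter (fun m => decide (m < l.getD n 0))
        ++ (l.drop n).filter (fun m => decide (m < l.getD n 0)) := by
    rw [← filter_append, take_append_drop]
  have h1 : (l.take n).filter (fun m => decide (m < l.getD n 0)) = l.take n := by
    apply filter_eq_self.mpr
    intro a ha
    obtain ⟨i, hi, rfl⟩ := List.mem_iff_getElem.mp ha
    have hil : i < n := by
      have := hi
      rw [length_take] at this
      omega
    rw [List.getElem_take, List.getD_eq_getElem _ _ hn]
    have := List.pairwise_iff_getElem.mp hl i n (by omega) hn hil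
    simpa using this
  have h2 : (l.drop n).filter (fun m => decide (m < l.getD n 0)) = [] := by
    apply List.filter_eq_nil_iff.mpr
    intro a ha
    obtain ⟨i, hi, rfl⟩ := List.mem_iff_getElem.mp ha
    have hni : n + i < l.length := by
      have := hi; rw [length_drop] at this; omega
    rw [List.getElem_drop, List.getD_eq_getElem _ _ hn]
    have hle : l[n] ≤ l[n + i] := by
      rcases Nat.eq_zero_or_pos i with h0 | h0
      · subst h0; simp
      · exact le_of_lt (List.pairwise_iff_getElem.mp hl n (n + i) hn hni (by omega))
    simpa using Nat.not_lt.mpr hle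
  rw [hsplit, h1, h2, append_nil]


theorem main {B W : Type*} [Inhabited B] [Group W] {M : CoxeterMatrix B}
    (cs : CoxeterSystem M W) (X : Set B) (P : Subgroup W)
    (w : List B) (v wr : ℕ → W) (p : ℕ → Bool)
    (hp : ∀ j, p j = true ↔ (cs.leftInvSeq w).getD j 1 ∈ P)
    (hdecomp : ∀ j ≤ w.length, cs.wordProd (w.take j) = v j * wr j)
    (hv : ∀ j ≤ w.length, v j ∈ P)
    (hwr : ∀ j ≤ w.length, ∀ x ∈ P,
      cs.length (x * wr j) = cs.length x + cs.length (wr j))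
    (q : ℕ → B)
    (hq : ∀ m ∈ (List.range w.length).filter p,
      q m ∈ X ∧ cs.simple (q m) = wr m * cs.simple (w.getD m default) * (wr m)⁻¹)
    (hqP : ∀ m ∈ (List.range w.length).filter p, cs.simple (q m) ∈ P) :
    ∀ n < ((List.range w.length).filter p).length,
      (cs.leftInvSeq (((List.range w.length).filter p).map q)).getD n 1 =
      (cs.leftInvSeq w).getD (((List.range w.length).filter p).getD n 0) 1 := by
  set N := w.length with hN
  set J := (List.range N).filter p with hJ
  have hsucc : ∀ j < N, cs.wordProd (w.take (j+1))
      = cs.wordProd (w.take j) * cs.simple (w.getD j default) := by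
    intro j hj
    have ht : w.take (j+1) = w.take j ++ [w.getD j default] := by
      rw [take_succ, getElem?_eq_getElem hj, List.getD_eq_getElem w default hj]
      rfl
    rw [ht, cs.wordProd_append, cs.wordProd_singleton]
  have hv0 : v 0 = 1 := by
    have h00 : (1 : W) = v 0 * wr 0 := by simpa using hdecomp 0 (Nat.zero_le _)
    have hl := hwr 0 (Nat.zero_le _) (v 0) (hv 0 (Nat.zero_le _))
    rw [← h00] at hl
    simp only [cs.length_one] at hl
    exact cs.length_eq_zero_iff.mp (by omega)
  have key : ∀ j < N, ∀ x : W, x ∈ P → x * wr (j+1) = wr j → x = 1 := by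
    intro j hj x hxP hx
    have h1 : cs.length (wr j) = cs.length x + cs.length (wr (j+1)) := by
      rw [← hx]; exact hwr (j+1) (by omega) x hxP
    have h2 : cs.length (wr (j+1)) = cs.length x + cs.length (wr j) := by
      have hx2 : x⁻¹ * wr j = wr (j+1) := by rw [← hx]; group
      have h3 := hwr j (by omega) x⁻¹ (inv_mem hxP)
      rw [hx2, cs.length_inv] at h3
      exact h3
    exact cs.length_eq_zero_iff.mp (by omega)
  have stepT : ∀ j < N, p j = true → v (j+1) = v j * cs.simple (q j) := by
    intro j hj hpj
    have hmem : j ∈ J := mem_filter.mpr ⟨mem_range.mpr hj, hpj⟩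
    obtain ⟨hqX, hconj⟩ := hq j hmem
    have hsP : cs.simple (q j) ∈ P := hqP j hmem
    have heq : v (j+1) * wr (j+1) = (v j * cs.simple (q j)) * wr j := by
      rw [← hdecomp (j+1) (by omega), hsucc j hj, hdecomp j (by omega), hconj]
      group
    have hxP : (v j * cs.simple (q j))⁻¹ * v (j+1) ∈ P :=
      mul_mem (inv_mem (mul_mem (hv j (by omega)) hsP)) (hv (j+1) (by omega))
    have hxw : ((v j * cs.simple (q j))⁻¹ * v (j+1)) * wr (j+1) = wr j := by
      rw [mul_assoc, heq]
      group
    exact (inv_mul_eq_one.mp (key j hj _ hxP hxw)).symm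
  have stepF : ∀ j < N, p j = false → v (j+1) = v j := by
    intro j hj hpj
    have heq : v (j+1) * wr (j+1) = v j * (wr j * cs.simple (w.getD j default)) := by
      rw [← hdecomp (j+1) (by omega), hsucc j hj, hdecomp j (by omega)]; group
    have hyP : (v j)⁻¹ * v (j+1) ∈ P :=
      mul_mem (inv_mem (hv j (by omega))) (hv (j+1) (by omega))
    set y := (v j)⁻¹ * v (j+1) with hydef
    have hy1 : y * wr (j+1) = wr j * cs.simple (w.getD j default) := by
      rw [hydef, mul_assoc, heq]; group
    have hy2 : wr (j+1) * cs.simple (w.getD j default) = y⁻¹ * wr j := by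
      have h4 : wr (j+1) = y⁻¹ * (wr j * cs.simple (w.getD j default)) := by
        rw [← hy1]; group
      rw [h4, ← mul_assoc, mul_assoc, cs.simple_mul_simple_self, mul_one]
    have e1 : cs.length (wr j * cs.simple (w.getD j default))
        = cs.length y + cs.length (wr (j+1)) := by
      rw [← hy1]; exact hwr (j+1) (by omega) y hyP
    have e2 : cs.length (wr (j+1) * cs.simple (w.getD j default))
        = cs.length y + cs.length (wr j) := by
      rw [hy2]
      have h5 := hwr j (by omega) y⁻¹ (inv_mem hyP)
      rwa [cs.length_inv] at h5
    have b1 := cs.length_mul_simple (wr j) (w.getD j default)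
    have b2 := cs.length_mul_simple (wr (j+1)) (w.getD j default)
    rcases Nat.lt_or_ge (cs.length y) 1 with h0 | h1
    · have hy0 : y = 1 := cs.length_eq_zero_iff.mp (by omega)
      rw [hydef] at hy0
      exact (inv_mul_eq_one.mp hy0).symm
    · exfalso
      have hy_len : cs.length y = 1 := by omega
      have hAA : cs.length (wr (j+1)) = cs.length (wr j) := by omega
      obtain ⟨b, hb⟩ := cs.length_eq_one_iff.mp hy_len
      obtain ⟨ω, hωred, hωeq⟩ := cs.exists_reduced_word' (wr j)
      have hωlen : ω.length = cs.length (wr j) := by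
        rw [hωeq]; exact hωred.symm
      have hπcons : cs.wordProd (b :: ω) = y * wr j := by
        rw [cs.wordProd_cons, ← hωeq, hb]
      have hzlen : cs.length (cs.wordProd (b :: ω)) = 1 + cs.length (wr j) := by
        rw [hπcons, hwr j (by omega) y hyP, hy_len]
      have hzred : cs.IsReduced (b :: ω) := by
        show cs.length (cs.wordProd (b :: ω)) = (b :: ω).length
        rw [hzlen, List.length_cons, hωlen]
        omega
      have hmuls : cs.wordProd (b :: ω) * cs.simple (w.getD j default) = wr (j+1) := by
        rw [hπcons, mul_assoc, ← hy1, ← mul_assoc, hb, cs.simple_mul_simple_self, one_mul]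
      have hlt : cs.length (cs.wordProd (b :: ω) * cs.simple (w.getD j default))
          < cs.length (cs.wordProd (b :: ω)) := by
        rw [hmuls, hzlen, hAA]; omega
      obtain ⟨k, hk, hkeq⟩ := exchange cs hzred hlt
      cases k with
      | zero =>
          rw [hmuls] at hkeq
          have hw1 : wr (j+1) = wr j := by
            rw [hkeq]
            show cs.wordProd ω = wr j
            exact hωeq.symm
          have hyval : wr j * cs.simple (w.getD j default) * (wr j)⁻¹ = y := by
            rw [← hy1, hw1]; group
          have hrj : (cs.leftInvSeq w).getD j 1 ∈ P := by
            have hgd := cs.getD_leftInvSeq w j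
            have hget : w[j]? = some (w.getD j default) := by
              rw [getElem?_eq_getElem hj,
                List.getD_eq_getElem w default hj]
            rw [hget] at hgd
            simp only [Option.map_some, Option.getD_some] at hgd
            rw [hgd, hdecomp j (by omega)]
            have hre : v j * wr j * cs.simple (w.getD j default) * (v j * wr j)⁻¹
                = v j * (wr j * cs.simple (w.getD j default) * (wr j)⁻¹) * (v j)⁻¹ := by
              group
            rw [hre, hyval]
            exact mul_mem (mul_mem (hv j (by omega)) hyP) (inv_mem (hv j (by omega)))
          have hcontra := (hp j).mpr hrj
          rw [hpj] at hcontra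
          exact Bool.noConfusion hcontra
      | succ k =>
          have hklen : k < ω.length := by simpa using hk
          rw [hmuls, List.eraseIdx_cons_succ, cs.wordProd_cons] at hkeq
          have h5 : cs.simple b * wr (j+1) = cs.wordProd (ω.eraseIdx k) := by
            rw [hkeq, ← mul_assoc, cs.simple_mul_simple_self, one_mul]
          have h6 : cs.length (cs.simple b * wr (j+1)) = 1 + cs.length (wr (j+1)) := by
            have h7 := hwr (j+1) (by omega) y hyP
            rw [hy_len] at h7
            rw [← hb]
            exact h7
          have h8 : cs.length (cs.wordProd (ω.eraseIdx k)) + 1 ≤ ω.length := by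
            have h9 := cs.length_wordProd_le (ω.eraseIdx k)
            have h10 := List.length_eraseIdx_add_one hklen
            omega
          rw [h5] at h6
          omega
  have F3 : ∀ j, j ≤ N → cs.wordProd (((List.range j).filter p).map q) = v j := by
    intro j
    induction j with
    | zero =>
        intro _
        simpa using hv0.symm
    | succ j ih =>
        intro hj1
        have hj : j < N := by omega
        rw [range_succ, filter_append, map_append, cs.wordProd_append, ih (by omega)]
        cases hpj : p j with
        | false =>
            have hf : [j].filter p = [] := by simp [List.filter_singleton, hpj]
            rw [hf]
            simp [stepF j hj hpj]
        | true =>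
            have hf : [j].filter p = [j] := by simp [List.filter_singleton, hpj]
            rw [hf, List.map_singleton, cs.wordProd_singleton, stepT j hj hpj]
  intro n hn
  set j := J.getD n 0 with hjdef
  have hjmem : j ∈ J := by
    rw [hjdef, List.getD_eq_getElem _ _ hn]
    exact List.getElem_mem _
  have hjN : j < N := mem_range.mp (mem_filter.mp hjmem).1
  have hpj : p j = true := (mem_filter.mp hjmem).2
  have hpair : J.Pairwise (· < ·) :=
    (List.pairwise_lt_range (n := N)).sublist List.filter_sublist
  have htake : J.take n = (List.range j).filter p := by
    rw [take_eq_filter_lt hpair hn, ← hjdef, hJ, List.filter_filter,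
      filter_range_lt p (le_of_lt hjN)]
  have hlis := cs.getD_leftInvSeq (J.map q) n
  have hget1 : (J.map q)[n]? = some (q j) := by
    rw [List.getElem?_map, getElem?_eq_getElem hn, hjdef,
      List.getD_eq_getElem J 0 hn]
    rfl
  rw [hget1] at hlis
  simp only [Option.map_some, Option.getD_some] at hlis
  have htake2 : (J.map q).take n = ((List.range j).filter p).map q := by
    rw [← List.map_take, htake]
  rw [htake2, F3 j (le_of_lt hjN)] at hlis
  have hris := cs.getD_leftInvSeq w j
  have hget2 : w[j]? = some (w.getD j default) := by
    rw [getElem?_eq_getElem hjN, List.getD_eq_getElem w default hjN]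
  rw [hget2] at hris
  simp only [Option.map_some, Option.getD_some] at hris
  rw [hlis, hris, hdecomp j (le_of_lt hjN)]
  obtain ⟨hqX, hconj⟩ := hq j hjmem
  rw [hconj]
  group

end
end ExchAux

/-- Let `w` be a word on `S` and let `J = (j₁ < ⋯ < j_p)` be the (`0`-based) positions whose
reflection `r_j(w)` lies in `W_X`.  Write each prefix element as `v_j·w_j` with `v_j ∈ W_X`
and `w_j` `(X,∅)`-reduced, and let `t_n = w_{j_n}·s_{i_{j_n}}·w_{j_n}⁻¹ = s_{q_n}` with
`q_n ∈ X`.  Then the reflection sequence of the word `w_X = q_1⋯q_p` on `X` is exactly the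
subsequence of `R(w)` of entries lying in `W_X`: `r_n(w_X) = r_{j_n}(w)` for all `n`. -/
theorem leftInvSeq_parabolic_subword {B W : Type*} [Inhabited B] [Group W] {M : CoxeterMatrix B}
    (cs : CoxeterSystem M W) (X : Set B)
    [∀ a : W, Decidable (a ∈ cs.standardParabolic X)]
    (w : List B) (v wr : ℕ → W)
    (hdecomp : ∀ j ≤ w.length, cs.wordProd (w.take j) = v j * wr j)
    (hv : ∀ j ≤ w.length, v j ∈ cs.standardParabolic X)
    (hwr : ∀ j ≤ w.length, ∀ x ∈ cs.standardParabolic X,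
      cs.length (x * wr j) = cs.length x + cs.length (wr j))
    (q : ℕ → B)
    (hq : ∀ m ∈ (List.range w.length).filter
        (fun m => decide ((cs.leftInvSeq w).getD m 1 ∈ cs.standardParabolic X)),
      q m ∈ X ∧ cs.simple (q m) = wr m * cs.simple (w.getD m default) * (wr m)⁻¹) :
    ∀ n < ((List.range w.length).filter
        (fun m => decide ((cs.leftInvSeq w).getD m 1 ∈ cs.standardParabolic X))).length,
      (cs.leftInvSeq (((List.range w.length).filter
          (fun m => decide ((cs.leftInvSeq w).getD m 1 ∈ cs.standardParabolic X))).map q)).getD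
            n 1 =
      (cs.leftInvSeq w).getD
        (((List.range w.length).filter
          (fun m => decide ((cs.leftInvSeq w).getD m 1 ∈ cs.standardParabolic X))).getD n 0)
        1 := by
  have hqP : ∀ m ∈ (List.range w.length).filter
      (fun m => decide ((cs.leftInvSeq w).getD m 1 ∈ cs.standardParabolic X)),
      cs.simple (q m) ∈ cs.standardParabolic X := fun m hm =>
    Subgroup.subset_closure ⟨q m, (hq m hm).1, rfl⟩
  exact ExchAux.main cs X (cs.standardParabolic X) w v wr
    (fun m => decide ((cs.leftInvSeq w).getD m 1 ∈ cs.standardParabolic X))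
    (fun j => by simp) hdecomp hv hwr q hq hqP
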